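/- The canonical model M (whose states are the maximally consistent sets of modal formulas over Φ) is a saturated Kripke structure. -/

import Mathlib

/-- Modal formulas over a set `Φ` of atomic propositions. -/
inductive ModalFormula (Φ : Type*) : Type _ where
  | atom : Φ → ModalFormula Φ
  | top  : ModalFormula Φ
  | bot  : ModalFormula Φ
  | neg  : ModalFormula Φ → ModalFormula Φ
  | and  : ModalFormula Φ → ModalFormula Φ → ModalFormula Φ
  | or   : ModalFormula Φ → ModalFormula Φ → ModalFormula Φ
  | box  : ModalFormula Φ → ModalFormula Φ

/-- `◇φ := ¬□¬φ`. -/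
def ModalFormula.dia {Φ : Type*} (φ : ModalFormula Φ) : ModalFormula Φ :=
  .neg (.box (.neg φ))

/-- A Kripke structure on state set `X`: a transition relation and a valuation. -/
structure KripkeStructure (Φ X : Type*) where
  R : X → X → Prop
  v : X → Set Φ

/-- Satisfaction `x ⊨ φ`. -/
def Satisfies {Φ X : Type*} (M : KripkeStructure Φ X) : X → ModalFormula Φ → Prop
  | x, .atom p  => p ∈ M.v x
  | _, .top     => True
  | _, .bot     => False
  | x, .neg φ   => ¬ Satisfies M x φ
  | x, .and φ ψ => Satisfies M x φ ∧ Satisfies M x ψ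
  | x, .or φ ψ  => Satisfies M x φ ∨ Satisfies M x ψ
  | x, .box φ   => ∀ y, M.R x y → Satisfies M y φ

/-- `B` is a bisimulation between `M` and `N`. -/
def IsBisimulation {Φ X Y : Type*} (M : KripkeStructure Φ X) (N : KripkeStructure Φ Y)
    (B : X → Y → Prop) : Prop :=
  ∀ x y, B x y →
    M.v x = N.v y ∧
    (∀ x', M.R x x' → ∃ y', N.R y y' ∧ B x' y') ∧
    (∀ y', N.R y y' → ∃ x', M.R x x' ∧ B x' y')

/-- `x ∼ y` : there is a bisimulation relating `x` and `y`. -/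
def Bisimilar {Φ X Y : Type*} (M : KripkeStructure Φ X) (N : KripkeStructure Φ Y)
    (x : X) (y : Y) : Prop :=
  ∃ B : X → Y → Prop, IsBisimulation M N B ∧ B x y

/-- `x ≈ y` : logical equivalence. -/
def LogEquiv {Φ X Y : Type*} (M : KripkeStructure Φ X) (N : KripkeStructure Φ Y)
    (x : X) (y : Y) : Prop :=
  ∀ φ : ModalFormula Φ, Satisfies M x φ ↔ Satisfies N y φ

/-- A Kripke homomorphism: a map whose graph is a bisimulation. -/
def IsKripkeHom {Φ X Y : Type*} (M : KripkeStructure Φ X) (N : KripkeStructure Φ Y)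
    (f : X → Y) : Prop :=
  IsBisimulation M N (fun x y => y = f x)

/-- `x` is m-saturated: whenever every finite subset of `S` is satisfied at some
successor of `x`, some successor of `x` satisfies all of `S`. -/
def MSaturated {Φ X : Type*} (M : KripkeStructure Φ X) (x : X) : Prop :=
  ∀ S : Set (ModalFormula Φ),
    (∀ S₀ ⊆ S, S₀.Finite → ∃ y, M.R x y ∧ ∀ φ ∈ S₀, Satisfies M y φ) →
    ∃ y, M.R x y ∧ ∀ φ ∈ S, Satisfies M y φ

/-- A Kripke structure is saturated if every state is m-saturated. -/
def Saturated {Φ X : Type*} (M : KripkeStructure Φ X) : Prop :=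
  ∀ x : X, MSaturated M x

/-- `φ → ψ` abbreviates `¬φ ∨ ψ`. -/
def ModalFormula.impl {Φ : Type*} (φ ψ : ModalFormula Φ) : ModalFormula Φ :=
  .or (.neg φ) ψ

/-- Propositional evaluation of a modal formula: the boolean connectives are
interpreted classically were atoms and boxed formulas get their truth value
from the assignment `w`. -/
def PropEval {Φ : Type*} (w : ModalFormula Φ → Prop) : ModalFormula Φ → Prop
  | .atom p  => w (.atom p)
  | .top     => True
  | .bot     => False
  | .neg φ   => ¬ PropEval w φ
  | .and φ ψ => PropEval w φ ∧ PropEval w ψ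
  | .or φ ψ  => PropEval w φ ∨ PropEval w ψ
  | .box φ   => w (.box φ)

/-- A propositional tautology: true under every assignment of truth values to
atoms and boxed formulas. -/
def IsPropTautology {Φ : Type*} (φ : ModalFormula Φ) : Prop :=
  ∀ w : ModalFormula Φ → Prop, PropEval w φ

/-- Derivability in the minimal normal modal logic K: all propositional
tautologies, the axiom `□(φ→ψ) → (□φ→□ψ)`, modus ponens and necessitation. -/
inductive Deriv {Φ : Type*} : ModalFormula Φ → Prop where
  | taut {φ} : IsPropTautology φ → Deriv φ
  | axK (φ ψ : ModalFormula Φ) :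
      Deriv (ModalFormula.impl (.box (ModalFormula.impl φ ψ))
        (ModalFormula.impl (.box φ) (.box ψ)))
  | mp {φ ψ} : Deriv (ModalFormula.impl φ ψ) → Deriv φ → Deriv ψ
  | nec {φ} : Deriv φ → Deriv (.box φ)

/-- Conjunction of a finite list of formulas. -/
def listConj {Φ : Type*} (L : List (ModalFormula Φ)) : ModalFormula Φ :=
  L.foldr .and .top

/-- `u` is consistent if no finite subset of `u` derives `⊥`. -/
def Consistent {Φ : Type*} (u : Set (ModalFormula Φ)) : Prop :=
  ∀ L : List (ModalFormula Φ), (∀ φ ∈ L, φ ∈ u) →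
    ¬ Deriv (ModalFormula.impl (listConj L) .bot)

/-- `u` is maximally consistent. -/
def MaxConsistent {Φ : Type*} (u : Set (ModalFormula Φ)) : Prop :=
  Consistent u ∧ ∀ φ : ModalFormula Φ, φ ∈ u ∨ ModalFormula.neg φ ∈ u

/-- The states of the canonical model: maximally consistent sets. -/
def CanonicalState (Φ : Type*) : Type _ :=
  {u : Set (ModalFormula Φ) // MaxConsistent u}

/-- The canonical model: `u → w` iff `□φ ∈ u` implies `φ ∈ w`, and
`v(u) = u ∩ Φ`. -/
def CanonicalModel (Φ : Type*) : KripkeStructure Φ (CanonicalState Φ) where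
  R u w := ∀ φ : ModalFormula Φ, ModalFormula.box φ ∈ u.1 → φ ∈ w.1
  v u := {p : Φ | ModalFormula.atom p ∈ u.1}


section CanonicalSat

variable {Φ : Type*}

open ModalFormula

lemma propEval_listConj (w : ModalFormula Φ → Prop) :
    ∀ L : List (ModalFormula Φ), PropEval w (listConj L) ↔ ∀ φ ∈ L, PropEval w φ
  | [] => by simp [listConj, PropEval]
  | a :: L => by
    show PropEval w (.and a (listConj L)) ↔ _
    simp [PropEval, propEval_listConj w L]

lemma deriv_kdist {φ ψ : ModalFormula Φ} (h : Deriv (impl φ ψ)) :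
    Deriv (impl (.box φ) (.box ψ)) :=
  Deriv.mp (Deriv.axK φ ψ) (Deriv.nec h)

lemma mem_of_taut_list {u : Set (ModalFormula Φ)} (hu : MaxConsistent u)
    {φ : ModalFormula Φ} (L : List (ModalFormula Φ)) (hL : ∀ ψ ∈ L, ψ ∈ u)
    (ht : IsPropTautology (impl (listConj L) φ)) : φ ∈ u := by
  rcases hu.2 φ with h | h
  · exact h
  · exfalso
    apply hu.1 (ModalFormula.neg φ :: L)
      (by intro ψ hψ; rcases List.mem_cons.1 hψ with h' | h'
          · exact h' ▸ h
          · exact hL _ h')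
    apply Deriv.taut
    intro w
    have h1 := ht w
    show PropEval w (.or (.neg (.and (.neg φ) (listConj L))) .bot)
    have h2 : PropEval w (.or (.neg (listConj L)) φ) := h1
    simp only [PropEval] at h2 ⊢
    tauto

lemma mem_of_deriv {u : Set (ModalFormula Φ)} (hu : MaxConsistent u)
    {φ : ModalFormula Φ} (h : Deriv φ) : φ ∈ u := by
  rcases hu.2 φ with h' | h'
  · exact h'
  · exfalso
    apply hu.1 [ModalFormula.neg φ] (by simpa using h')
    refine Deriv.mp (Deriv.taut ?_) h
    intro w
    show PropEval w (.or (.neg φ) (.or (.neg (listConj [ModalFormula.neg φ])) .bot))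
    have : PropEval w (listConj [ModalFormula.neg φ]) ↔ _ :=
      propEval_listConj w [ModalFormula.neg φ]
    simp only [PropEval] at *
    simp only [List.mem_singleton, forall_eq, PropEval] at this; tauto

lemma mp_mem {u : Set (ModalFormula Φ)} (hu : MaxConsistent u)
    {φ ψ : ModalFormula Φ} (h1 : φ ∈ u) (h2 : impl φ ψ ∈ u) : ψ ∈ u := by
  refine mem_of_taut_list hu [φ, impl φ ψ] (by simp [h1, h2]) ?_
  intro w
  show PropEval w (.or (.neg (.and φ (.and (.or (.neg φ) ψ) .top))) ψ)
  simp only [PropEval]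
  tauto

lemma negf_mem_iff {u : Set (ModalFormula Φ)} (hu : MaxConsistent u)
    (φ : ModalFormula Φ) : ModalFormula.neg φ ∈ u ↔ φ ∉ u := by
  constructor
  · intro hn hp
    apply hu.1 [φ, ModalFormula.neg φ] (by simp [hn, hp])
    apply Deriv.taut
    intro w
    show PropEval w (.or (.neg (.and φ (.and (.neg φ) .top))) .bot)
    simp only [PropEval]
    tauto
  · intro hp
    rcases hu.2 φ with h | h
    · exact absurd h hp
    · exact h

lemma and_mem_iff {u : Set (ModalFormula Φ)} (hu : MaxConsistent u)
    (φ ψ : ModalFormula Φ) : ModalFormula.and φ ψ ∈ u ↔ φ ∈ u ∧ ψ ∈ u := by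
  constructor
  · intro h
    constructor
    · refine mem_of_taut_list hu [.and φ ψ] (by simp [h]) ?_
      intro w
      show PropEval w (.or (.neg (.and (.and φ ψ) .top)) φ)
      simp only [PropEval]; tauto
    · refine mem_of_taut_list hu [.and φ ψ] (by simp [h]) ?_
      intro w
      show PropEval w (.or (.neg (.and (.and φ ψ) .top)) ψ)
      simp only [PropEval]; tauto
  · rintro ⟨h1, h2⟩
    refine mem_of_taut_list hu [φ, ψ] (by simp [h1, h2]) ?_
    intro w
    show PropEval w (.or (.neg (.and φ (.and ψ .top))) (.and φ ψ))
    simp only [PropEval]; tauto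

lemma or_mem_iff {u : Set (ModalFormula Φ)} (hu : MaxConsistent u)
    (φ ψ : ModalFormula Φ) : ModalFormula.or φ ψ ∈ u ↔ φ ∈ u ∨ ψ ∈ u := by
  constructor
  · intro h
    by_contra hc
    push_neg at hc
    have hn1 := (negf_mem_iff hu φ).2 hc.1
    have hn2 := (negf_mem_iff hu ψ).2 hc.2
    apply hu.1 [.or φ ψ, .neg φ, .neg ψ] (by simp [h, hn1, hn2])
    apply Deriv.taut
    intro w
    show PropEval w (.or (.neg (.and (.or φ ψ) (.and (.neg φ) (.and (.neg ψ) .top)))) .bot)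
    simp only [PropEval]; tauto
  · intro h
    rcases h with h | h
    · refine mem_of_taut_list hu [φ] (by simp [h]) ?_
      intro w
      show PropEval w (.or (.neg (.and φ .top)) (.or φ ψ))
      simp only [PropEval]; tauto
    · refine mem_of_taut_list hu [ψ] (by simp [h]) ?_
      intro w
      show PropEval w (.or (.neg (.and ψ .top)) (.or φ ψ))
      simp only [PropEval]; tauto

lemma top_mem {u : Set (ModalFormula Φ)} (hu : MaxConsistent u) :
    (ModalFormula.top : ModalFormula Φ) ∈ u :=
  mem_of_deriv hu (Deriv.taut (fun _ => trivial))

lemma bot_not_mem {u : Set (ModalFormula Φ)} (hu : MaxConsistent u) :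
    (ModalFormula.bot : ModalFormula Φ) ∉ u := by
  intro h
  apply hu.1 [.bot] (by simp [h])
  apply Deriv.taut
  intro w
  show PropEval w (.or (.neg (.and .bot .top)) .bot)
  simp only [PropEval]; tauto

lemma box_listConj_mem {u : Set (ModalFormula Φ)} (hu : MaxConsistent u) :
    ∀ L : List (ModalFormula Φ), (∀ ψ ∈ L, ModalFormula.box ψ ∈ u) →
      ModalFormula.box (listConj L) ∈ u
  | [], _ => mem_of_deriv hu (Deriv.nec (Deriv.taut (fun _ => trivial)))
  | a :: L, h => by
    have ha : ModalFormula.box a ∈ u := h a (by simp)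
    have hL : ModalFormula.box (listConj L) ∈ u :=
      box_listConj_mem hu L (fun ψ hψ => h ψ (by simp [hψ]))
    have d1 : Deriv (impl a (impl (listConj L) (.and a (listConj L)))) := by
      apply Deriv.taut
      intro w
      show PropEval w (.or (.neg a) (.or (.neg (listConj L)) (.and a (listConj L))))
      simp only [PropEval]; tauto
    have d2 : Deriv (impl (.box a) (.box (impl (listConj L) (.and a (listConj L))))) :=
      deriv_kdist d1
    have h3 : ModalFormula.box (impl (listConj L) (.and a (listConj L))) ∈ u :=
      mp_mem hu ha (mem_of_deriv hu d2)
    have h4 : impl (.box (listConj L)) (.box (.and a (listConj L))) ∈ u :=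
      mp_mem hu h3 (mem_of_deriv hu (Deriv.axK _ _))
    exact mp_mem hu hL h4

/-- Lindenbaum's lemma. -/
lemma lindenbaum {u : Set (ModalFormula Φ)} (hu : Consistent u) :
    ∃ w : Set (ModalFormula Φ), MaxConsistent w ∧ u ⊆ w := by
  obtain ⟨w, huw, hmax⟩ :=
    zorn_subset_nonempty {v : Set (ModalFormula Φ) | Consistent v}
      (fun c hc hchain hne => by
        refine ⟨⋃₀ c, ?_, fun s hs => Set.subset_sUnion_of_mem hs⟩
        intro L hL hd
        have : ∃ t ∈ c, ∀ φ ∈ L, φ ∈ t := by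
          clear hd
          induction L with
          | nil => exact ⟨hne.some, hne.some_mem, by simp⟩
          | cons a L ih =>
            obtain ⟨t, htc, ht⟩ := ih (fun φ hφ => hL φ (by simp [hφ]))
            obtain ⟨s, hsc, has⟩ := hL a (by simp)
            rcases hchain.total htc hsc with hts | hst
            · exact ⟨s, hsc, by
                intro φ hφ
                rcases List.mem_cons.1 hφ with h | h
                · exact h ▸ has
                · exact hts (ht φ h)⟩
            · exact ⟨t, htc, by
                intro φ hφ
                rcases List.mem_cons.1 hφ with h | h
                · exact h ▸ hst has
                · exact ht φ h⟩
        obtain ⟨t, htc, ht⟩ := this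
        exact hc htc L ht hd) u hu
  have hwS : Consistent w := hmax.1
  refine ⟨w, ⟨hwS, ?_⟩, huw⟩
  intro φ
  by_contra hc
  push_neg at hc
  classical
  -- both insertions are inconsistent
  have h1 : ¬ Consistent (insert φ w) := by
    intro h
    exact hc.1 (hmax.2 h (Set.subset_insert _ _) (Set.mem_insert φ w))
  have h2 : ¬ Consistent (insert (ModalFormula.neg φ) w) := by
    intro h
    exact hc.2 (hmax.2 h (Set.subset_insert _ _) (Set.mem_insert _ w))
  simp only [Consistent, not_forall, not_not] at h1 h2
  obtain ⟨L₁, hL₁, hd₁⟩ := h1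
  obtain ⟨L₂, hL₂, hd₂⟩ := h2
  set L₁' := L₁.filter (fun ψ => ψ ≠ φ) with hL₁'def
  set L₂' := L₂.filter (fun ψ => ψ ≠ ModalFormula.neg φ) with hL₂'def
  have hsub : ∀ ψ ∈ L₁' ++ L₂', ψ ∈ w := by
    intro ψ hψ
    rcases List.mem_append.1 hψ with h | h
    · have := List.mem_filter.1 h
      rcases hL₁ ψ this.1 with h' | h'
      · exact absurd h' (by simpa using this.2)
      · exact h'
    · have := List.mem_filter.1 h
      rcases hL₂ ψ this.1 with h' | h'
      · exact absurd h' (by simpa using this.2)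
      · exact h'
  apply hwS (L₁' ++ L₂') hsub
  have taut : IsPropTautology
      (impl (impl (listConj L₁) .bot)
        (impl (impl (listConj L₂) .bot) (impl (listConj (L₁' ++ L₂')) .bot))) := by
    intro v
    show PropEval v (.or (.neg (.or (.neg (listConj L₁)) .bot))
      (.or (.neg (.or (.neg (listConj L₂)) .bot)) (.or (.neg (listConj (L₁' ++ L₂'))) .bot)))
    simp only [PropEval, propEval_listConj]
    by_cases hLL : ∀ ψ ∈ L₁' ++ L₂', PropEval v ψ
    · by_cases hφ : PropEval v φ
      · -- all of L₁ hold
        have : ∀ ψ ∈ L₁, PropEval v ψ := by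
          intro ψ hψ
          by_cases he : ψ = φ
          · exact he ▸ hφ
          · exact hLL ψ (List.mem_append.2 (Or.inl (List.mem_filter.2 ⟨hψ, by simpa using he⟩)))
        tauto
      · have : ∀ ψ ∈ L₂, PropEval v ψ := by
          intro ψ hψ
          by_cases he : ψ = ModalFormula.neg φ
          · subst he; exact hφ
          · exact hLL ψ (List.mem_append.2 (Or.inr (List.mem_filter.2 ⟨hψ, by simpa using he⟩)))
        tauto
    · tauto
  exact Deriv.mp (Deriv.mp (Deriv.taut taut) hd₁) hd₂

/-- The truth lemma for the canonical model. -/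
lemma truth_lemma (u : CanonicalState Φ) (φ : ModalFormula Φ) :
    Satisfies (CanonicalModel Φ) u φ ↔ φ ∈ u.1 := by
  induction φ generalizing u with
  | atom p => exact Iff.rfl
  | top => simpa [Satisfies] using top_mem u.2
  | bot => simpa [Satisfies] using bot_not_mem u.2
  | neg φ ih => simp [Satisfies, ih, negf_mem_iff u.2]
  | and φ ψ ih1 ih2 => simp [Satisfies, ih1, ih2, and_mem_iff u.2]
  | or φ ψ ih1 ih2 => simp [Satisfies, ih1, ih2, or_mem_iff u.2]
  | box φ ih =>
    constructor
    · intro h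
      rcases u.2.2 (.box φ) with hb | hb
      · exact hb
      · exfalso
        classical
        -- the set {ψ | box ψ ∈ u} ∪ {neg φ} is consistent
        have hcons : Consistent ({ψ | ModalFormula.box ψ ∈ u.1} ∪ {ModalFormula.neg φ}) := by
          intro L hL hd
          set L₀ := L.filter (fun ψ => ψ ≠ ModalFormula.neg φ) with hL₀def
          have hsub : ∀ ψ ∈ L₀, ModalFormula.box ψ ∈ u.1 := by
            intro ψ hψ
            have := List.mem_filter.1 hψ
            rcases hL ψ this.1 with h' | h'
            · exact h'
            · exact absurd (by simpa using h') (by simpa using this.2)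
          have taut : IsPropTautology (impl (impl (listConj L) .bot) (impl (listConj L₀) φ)) := by
            intro v
            show PropEval v (.or (.neg (.or (.neg (listConj L)) .bot))
              (.or (.neg (listConj L₀)) φ))
            simp only [PropEval, propEval_listConj]
            by_cases hφ : PropEval v φ
            · tauto
            · by_cases hL0 : ∀ ψ ∈ L₀, PropEval v ψ
              · have : ∀ ψ ∈ L, PropEval v ψ := by
                  intro ψ hψ
                  by_cases he : ψ = ModalFormula.neg φ
                  · subst he; exact hφ
                  · exact hL0 ψ (List.mem_filter.2 ⟨hψ, by simpa using he⟩)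
                tauto
              · tauto
          have d1 : Deriv (impl (listConj L₀) φ) := Deriv.mp (Deriv.taut taut) hd
          have d2 : Deriv (impl (.box (listConj L₀)) (.box φ)) := deriv_kdist d1
          have h3 : ModalFormula.box (listConj L₀) ∈ u.1 := box_listConj_mem u.2 L₀ hsub
          have h4 : ModalFormula.box φ ∈ u.1 := mp_mem u.2 h3 (mem_of_deriv u.2 d2)
          exact (negf_mem_iff u.2 _).1 hb h4
        obtain ⟨w, hwmax, hw⟩ := lindenbaum hcons
        have hRuw : (CanonicalModel Φ).R u ⟨w, hwmax⟩ := by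
          intro ψ hψ
          exact hw (Or.inl hψ)
        have hφw : φ ∈ w := (ih ⟨w, hwmax⟩).1 (h _ hRuw)
        have : ModalFormula.neg φ ∈ w := hw (Or.inr rfl)
        exact (negf_mem_iff hwmax φ).1 this hφw
    · intro h y hy
      exact (ih y).2 (hy φ h)

end CanonicalSat

/-- The canonical model is saturated. -/
theorem canonicalModel_saturated (Φ : Type*) : Saturated (CanonicalModel Φ) := by
  intro x S hS
  classical
  have hcons : Consistent ({ψ | ModalFormula.box ψ ∈ x.1} ∪ S) := by
    intro L hL hd
    obtain ⟨y, hxy, hy⟩ := hS {φ | φ ∈ L ∧ φ ∈ S} (fun φ hφ => hφ.2)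
      (Set.Finite.subset L.finite_toSet (fun φ hφ => hφ.1))
    apply y.2.1 L ?_ hd
    intro ψ hψ
    rcases hL ψ hψ with h | h
    · exact hxy ψ h
    · exact (truth_lemma y ψ).1 (hy ψ ⟨hψ, h⟩)
  obtain ⟨w, hwmax, hw⟩ := lindenbaum hcons
  refine ⟨⟨w, hwmax⟩, ?_, ?_⟩
  · intro ψ hψ
    exact hw (Or.inl hψ)
  · intro φ hφ
    exact (truth_lemma ⟨w, hwmax⟩ φ).2 (hw (Or.inr hφ))
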